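/- arXiv:2412.13362 — 2 statements merged into one kernel-verified Lean document; each statement's English description precedes it below -/
import Mathlib

section
/- For every real number s with |s| ≤ ∫₀¹ |f₁(u)f₂(u)f₃(u)| du, there exists a probability space carrying random variables X₁, X₂, X₃ such that X_i has the same distribution as f_i(U) for each i, the pairwise covariances E[X_iX_j] (i ≠ j) are all zero, and E[X₁X₂X₃] = s. In other words, with symmetric marginal distributions, every admissible value of coskewness can be attained simultaneously with all pairwise correlations equal to zero. -/
open MeasureTheory ProbabilityTheory
open scoped ENNReal

lemma amgm3 {x y z : ℝ} (hx : 0 ≤ x) (hy : 0 ≤ y) (hz : 0 ≤ z) :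
    x * y * z ≤ x ^ 3 + y ^ 3 + z ^ 3 := by
  have h2 : 0 ≤ x^2 + y^2 + z^2 - x*y - y*z - x*z := by
    nlinarith [sq_nonneg (x - y), sq_nonneg (y - z), sq_nonneg (x - z)]
  nlinarith [mul_nonneg (add_nonneg (add_nonneg hx hy) hz) h2,
    mul_nonneg (mul_nonneg hx hy) hz]

lemma refl_mp : MeasurePreserving (fun x : ℝ => 1 - x)
    (volume.restrict (Set.Ioo (0:ℝ) 1)) (volume.restrict (Set.Ioo (0:ℝ) 1)) := by
  have h := (Measure.measurePreserving_sub_left (volume : Measure ℝ) 1).restrict_preimage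
    (measurableSet_Ioo : MeasurableSet (Set.Ioo (0:ℝ) 1))
  have hpre : (fun x : ℝ => 1 - x) ⁻¹' Set.Ioo 0 1 = Set.Ioo 0 1 := by
    ext x
    simp only [Set.mem_preimage, Set.mem_Ioo]
    constructor <;> rintro ⟨h1, h2⟩ <;> constructor <;> linarith
  rwa [hpre] at h

-- symmetry of the law
lemma law_neg (f : ℝ → ℝ) (hf : Measurable f)
    (hsym : ∀ u ∈ Set.Ioo (0:ℝ) 1, f (1 - u) = - f u) :
    (volume.restrict (Set.Ioo (0:ℝ) 1)).map (fun u => -(f u)) =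
      (volume.restrict (Set.Ioo (0:ℝ) 1)).map f := by
  set μ := volume.restrict (Set.Ioo (0:ℝ) 1) with hμ
  have h1 : μ.map (fun u => f (1 - u)) = μ.map f := by
    have := Measure.map_map (μ := μ) hf refl_mp.measurable
    rw [refl_mp.map_eq] at this
    rw [hμ]; rw [this]; rfl
  rw [← h1]
  apply Measure.map_congr
  filter_upwards [ae_restrict_mem measurableSet_Ioo] with u hu
  exact (hsym u hu).symm

-- the key folding identity
lemma law_abs (f : ℝ → ℝ) (hf : Measurable f)
    (hsym : ∀ u ∈ Set.Ioo (0:ℝ) 1, f (1 - u) = - f u) :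
    (volume.restrict (Set.Ioo (0:ℝ) 1)).map (fun u => |f u|)
      + (volume.restrict (Set.Ioo (0:ℝ) 1)).map (fun u => -|f u|)
    = (volume.restrict (Set.Ioo (0:ℝ) 1)).map f
      + (volume.restrict (Set.Ioo (0:ℝ) 1)).map f := by
  set μ := volume.restrict (Set.Ioo (0:ℝ) 1) with hμ
  have hneg := law_neg f hf hsym
  ext A hA
  simp only [Measure.add_apply]
  rw [Measure.map_apply hf.abs hA, Measure.map_apply (show Measurable (fun u => -|f u|) from hf.abs.neg) hA,
    Measure.map_apply hf hA]
  have hsymA : μ ((fun u => -(f u)) ⁻¹' A) = μ (f ⁻¹' A) := by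
    rw [← Measure.map_apply (show Measurable (fun u => -(f u)) from hf.neg) hA, ← Measure.map_apply hf hA]
    exact congrFun (congrArg _ hneg) A
  set S : Set ℝ := {u | 0 ≤ f u} with hS
  have hSm : MeasurableSet S := measurableSet_le measurable_const hf
  have d : ∀ s : Set ℝ, μ s = μ (s ∩ S) + μ (s ∩ Sᶜ) := fun s => by
    rw [← measure_inter_add_diff s hSm, Set.diff_eq]
  have e1 : (fun u => |f u|) ⁻¹' A ∩ S = f ⁻¹' A ∩ S := by
    ext u
    simp only [Set.mem_inter_iff, Set.mem_preimage, hS, Set.mem_setOf_eq]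
    constructor <;> rintro ⟨h1, h2⟩ <;> refine ⟨?_, h2⟩
    · rwa [abs_of_nonneg h2] at h1
    · rwa [abs_of_nonneg h2]
  have e2 : (fun u => |f u|) ⁻¹' A ∩ Sᶜ = (fun u => -(f u)) ⁻¹' A ∩ Sᶜ := by
    ext u
    simp only [Set.mem_inter_iff, Set.mem_preimage, hS, Set.mem_compl_iff,
      Set.mem_setOf_eq, not_le]
    constructor <;> rintro ⟨h1, h2⟩ <;> refine ⟨?_, h2⟩
    · rwa [abs_of_neg h2] at h1
    · rwa [abs_of_neg h2]
  have e3 : (fun u => -|f u|) ⁻¹' A ∩ S = (fun u => -(f u)) ⁻¹' A ∩ S := by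
    ext u
    simp only [Set.mem_inter_iff, Set.mem_preimage, hS, Set.mem_setOf_eq]
    constructor <;> rintro ⟨h1, h2⟩ <;> refine ⟨?_, h2⟩
    · rwa [abs_of_nonneg h2] at h1
    · rwa [abs_of_nonneg h2]
  have e4 : (fun u => -|f u|) ⁻¹' A ∩ Sᶜ = f ⁻¹' A ∩ Sᶜ := by
    ext u
    simp only [Set.mem_inter_iff, Set.mem_preimage, hS, Set.mem_compl_iff,
      Set.mem_setOf_eq, not_le]
    constructor <;> rintro ⟨h1, h2⟩ <;> refine ⟨?_, h2⟩
    · rwa [abs_of_neg h2, neg_neg] at h1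
    · rwa [abs_of_neg h2, neg_neg]
  rw [d ((fun u => |f u|) ⁻¹' A), d ((fun u => -|f u|) ⁻¹' A), e1, e2, e3, e4]
  nth_rewrite 2 [← hsymA]
  rw [d (f ⁻¹' A), d ((fun u => -(f u)) ⁻¹' A)]
  abel

def sg (b : Bool) : ℝ := cond b 1 (-1)
@[simp] lemma sg_true : sg true = 1 := rfl
@[simp] lemma sg_false : sg false = -1 := rfl

abbrev Om : Type := (Bool × Bool × Bool) × ℝ

lemma mapR (μ : Measure ℝ) (b : Bool × Bool × Bool) {g : Om → ℝ} (hg : Measurable g) :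
    (μ.map (fun u => ((b, u) : Om))).map g = μ.map (fun u => g (b, u)) := by
  rw [Measure.map_map hg measurable_prodMk_left]; rfl

lemma intR (μ : Measure ℝ) (b : Bool × Bool × Bool) {g : Om → ℝ} (hg : Measurable g) :
    ∫ ω, g ω ∂(μ.map (fun u => ((b, u) : Om))) = ∫ u, g (b, u) ∂μ :=
  integral_map measurable_prodMk_left.aemeasurable hg.aestronglyMeasurable

lemma intableR (μ : Measure ℝ) (b : Bool × Bool × Bool) {g : Om → ℝ} (hg : Measurable g)
    (h : Integrable (fun u => g (b, u)) μ) :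
    Integrable g (μ.map (fun u => ((b, u) : Om))) :=
  (integrable_map_measure hg.aestronglyMeasurable measurable_prodMk_left.aemeasurable).mpr h

lemma quarter {α : Type*} [MeasurableSpace α] (m A B : Measure α) (h : A + B = m + m) :
    (4 : ℝ≥0∞)⁻¹ • (A + A + B + B) = m := by
  have h4 : A + A + B + B = (4 : ℝ≥0∞) • m := by
    have e : A + A + B + B = (A + B) + (A + B) := by abel
    rw [e, h]
    ext s hs
    simp only [Measure.add_apply, Measure.smul_apply, smul_eq_mul]
    ring
  rw [h4, smul_smul, ENNReal.inv_mul_cancel (by norm_num) (by norm_num), one_smul]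

lemma int_quarter {α : Type*} [MeasurableSpace α] (m1 m2 m3 m4 : Measure α) {g : α → ℝ}
    (h1 : Integrable g m1) (h2 : Integrable g m2) (h3 : Integrable g m3) (h4 : Integrable g m4) :
    ∫ a, g a ∂((4 : ℝ≥0∞)⁻¹ • (m1 + m2 + m3 + m4)) =
      (4 : ℝ)⁻¹ * (∫ a, g a ∂m1 + ∫ a, g a ∂m2 + ∫ a, g a ∂m3 + ∫ a, g a ∂m4) := by
  rw [integral_smul_measure,
    integral_add_measure ((h1.add_measure h2).add_measure h3) h4,
    integral_add_measure (h1.add_measure h2) h3, integral_add_measure h1 h2]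
  simp [ENNReal.toReal_inv, smul_eq_mul]

lemma int_P {α : Type*} [MeasurableSpace α] (cp cm : ℝ≥0∞) (hcp : cp ≠ ⊤) (hcm : cm ≠ ⊤)
    (Qp Qm : Measure α) {g : α → ℝ} (hp : Integrable g Qp) (hm : Integrable g Qm) :
    ∫ a, g a ∂(cp • Qp + cm • Qm) = cp.toReal * ∫ a, g a ∂Qp + cm.toReal * ∫ a, g a ∂Qm := by
  rw [integral_add_measure (hp.smul_measure hcp) (hm.smul_measure hcm),
    integral_smul_measure, integral_smul_measure]
  simp [smul_eq_mul]

lemma reord1 {α : Type*} [MeasurableSpace α] (A B : Measure α) : A + B + A + B = A + A + B + B := by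
  abel
lemma reord2 {α : Type*} [MeasurableSpace α] (A B : Measure α) : A + B + B + A = A + A + B + B := by
  abel
lemma reord3 {α : Type*} [MeasurableSpace α] (A B : Measure α) : B + A + A + B = A + A + B + B := by
  abel
/-- every coskewness value `s` with `|s| ≤ ∫₀¹ |f₁ f₂ f₃|` is attained by
some random vector whose components are distributed as `f₁(U)`, `f₂(U)`, `f₃(U)`
(with `U` uniform on `[0,1]`) and whose pairwise covariances all vanish. -/
theorem stmt6 (f₁ f₂ f₃ : ℝ → ℝ)
    (hf₁ : Measurable f₁) (hf₂ : Measurable f₂) (hf₃ : Measurable f₃)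
    (hf₁mono : MonotoneOn f₁ (Set.Ioo 0 1)) (hf₂mono : MonotoneOn f₂ (Set.Ioo 0 1))
    (hf₃mono : MonotoneOn f₃ (Set.Ioo 0 1))
    (hf₁sym : ∀ u ∈ Set.Ioo (0:ℝ) 1, f₁ (1 - u) = - f₁ u)
    (hf₂sym : ∀ u ∈ Set.Ioo (0:ℝ) 1, f₂ (1 - u) = - f₂ u)
    (hf₃sym : ∀ u ∈ Set.Ioo (0:ℝ) 1, f₃ (1 - u) = - f₃ u)
    (hf₁int : IntegrableOn (fun u => |f₁ u| ^ 3) (Set.Ioo (0:ℝ) 1) volume)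
    (hf₂int : IntegrableOn (fun u => |f₂ u| ^ 3) (Set.Ioo (0:ℝ) 1) volume)
    (hf₃int : IntegrableOn (fun u => |f₃ u| ^ 3) (Set.Ioo (0:ℝ) 1) volume)
    (s : ℝ) (hs : |s| ≤ ∫ u in Set.Ioo (0:ℝ) 1, |f₁ u * f₂ u * f₃ u|) :
    ∃ (Ω : Type) (_ : MeasurableSpace Ω) (P : Measure Ω) (_ : IsProbabilityMeasure P)
      (X₁ X₂ X₃ : Ω → ℝ), Measurable X₁ ∧ Measurable X₂ ∧ Measurable X₃ ∧
      P.map X₁ = (volume.restrict (Set.Ioo (0:ℝ) 1)).map f₁ ∧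
      P.map X₂ = (volume.restrict (Set.Ioo (0:ℝ) 1)).map f₂ ∧
      P.map X₃ = (volume.restrict (Set.Ioo (0:ℝ) 1)).map f₃ ∧
      (∫ ω, X₁ ω * X₂ ω ∂P = 0) ∧
      (∫ ω, X₁ ω * X₃ ω ∂P = 0) ∧
      (∫ ω, X₂ ω * X₃ ω ∂P = 0) ∧
      ∫ ω, X₁ ω * X₂ ω * X₃ ω ∂P = s := by
  set μ := volume.restrict (Set.Ioo (0:ℝ) 1) with hμdef
  have hprob : IsProbabilityMeasure μ := ⟨by rw [hμdef]; simp [Real.volume_Ioo]⟩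
  haveI := hprob
  set I := ∫ u in Set.Ioo (0:ℝ) 1, |f₁ u * f₂ u * f₃ u| with hIdef
  have hInn : (0:ℝ) ≤ I := integral_nonneg fun u => abs_nonneg _
  obtain ⟨t, ht1, hts⟩ : ∃ t : ℝ, |t| ≤ 1 ∧ t * I = s := by
    rcases eq_or_ne I 0 with h0 | h0
    · have hs0 : s = 0 := abs_nonpos_iff.mp (h0 ▸ hs)
      exact ⟨0, by norm_num, by simp [hs0]⟩
    · have hIpos : 0 < I := lt_of_le_of_ne hInn (Ne.symm h0)
      refine ⟨s / I, ?_, div_mul_cancel₀ s h0⟩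
      rw [abs_div, abs_of_pos hIpos]
      exact (div_le_one hIpos).mpr hs
  obtain ⟨htm, htp⟩ := abs_le.mp ht1
  have hcp0 : (0:ℝ) ≤ (1 + t)/2 := by linarith
  have hcm0 : (0:ℝ) ≤ (1 - t)/2 := by linarith
  -- integrability of products
  have h12 : Integrable (fun u => |f₁ u| * |f₂ u|) μ := by
    refine Integrable.mono' ((integrable_const (1:ℝ)).add (hf₁int.add hf₂int))
      (hf₁.abs.mul hf₂.abs).aestronglyMeasurable ?_
    filter_upwards with u
    simp only [Pi.add_apply]
    rw [Real.norm_eq_abs, abs_of_nonneg (mul_nonneg (abs_nonneg _) (abs_nonneg _))]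
    have h := amgm3 (abs_nonneg (f₁ u)) (abs_nonneg (f₂ u)) (zero_le_one (α := ℝ))
    simp only [one_pow, mul_one] at h
    linarith
  have h13 : Integrable (fun u => |f₁ u| * |f₃ u|) μ := by
    refine Integrable.mono' ((integrable_const (1:ℝ)).add (hf₁int.add hf₃int))
      (hf₁.abs.mul hf₃.abs).aestronglyMeasurable ?_
    filter_upwards with u
    simp only [Pi.add_apply]
    rw [Real.norm_eq_abs, abs_of_nonneg (mul_nonneg (abs_nonneg _) (abs_nonneg _))]
    have h := amgm3 (abs_nonneg (f₁ u)) (abs_nonneg (f₃ u)) (zero_le_one (α := ℝ))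
    simp only [one_pow, mul_one] at h
    linarith
  have h23 : Integrable (fun u => |f₂ u| * |f₃ u|) μ := by
    refine Integrable.mono' ((integrable_const (1:ℝ)).add (hf₂int.add hf₃int))
      (hf₂.abs.mul hf₃.abs).aestronglyMeasurable ?_
    filter_upwards with u
    simp only [Pi.add_apply]
    rw [Real.norm_eq_abs, abs_of_nonneg (mul_nonneg (abs_nonneg _) (abs_nonneg _))]
    have h := amgm3 (abs_nonneg (f₂ u)) (abs_nonneg (f₃ u)) (zero_le_one (α := ℝ))
    simp only [one_pow, mul_one] at h
    linarith
  have h123 : Integrable (fun u => |f₁ u| * |f₂ u| * |f₃ u|) μ := by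
    refine Integrable.mono' (hf₁int.add (hf₂int.add hf₃int))
      ((hf₁.abs.mul hf₂.abs).mul hf₃.abs).aestronglyMeasurable ?_
    filter_upwards with u
    simp only [Pi.add_apply]
    rw [Real.norm_eq_abs,
      abs_of_nonneg (mul_nonneg (mul_nonneg (abs_nonneg _) (abs_nonneg _)) (abs_nonneg _))]
    have h := amgm3 (abs_nonneg (f₁ u)) (abs_nonneg (f₂ u)) (abs_nonneg (f₃ u))
    linarith
  have hKI : ∫ u, |f₁ u| * |f₂ u| * |f₃ u| ∂μ = I := by
    rw [hIdef]
    simp only [abs_mul]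
    rfl
  -- the measures
  set R : Bool × Bool × Bool → Measure Om := fun b => μ.map (fun u => ((b, u) : Om)) with hR
  set Qp : Measure Om := (4 : ℝ≥0∞)⁻¹ • (R (true,true,true) + R (true,false,false)
    + R (false,true,false) + R (false,false,true)) with hQp
  set Qm : Measure Om := (4 : ℝ≥0∞)⁻¹ • (R (true,true,false) + R (true,false,true)
    + R (false,true,true) + R (false,false,false)) with hQm
  set cp : ℝ≥0∞ := ENNReal.ofReal ((1 + t)/2) with hcp
  set cm : ℝ≥0∞ := ENNReal.ofReal ((1 - t)/2) with hcm
  set P : Measure Om := cp • Qp + cm • Qm with hP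
  have hcpT : cp ≠ ⊤ := ENNReal.ofReal_ne_top
  have hcmT : cm ≠ ⊤ := ENNReal.ofReal_ne_top
  have hcpR : cp.toReal = (1 + t)/2 := ENNReal.toReal_ofReal hcp0
  have hcmR : cm.toReal = (1 - t)/2 := ENNReal.toReal_ofReal hcm0
  have hcpcm : cp + cm = 1 := by
    rw [hcp, hcm, ← ENNReal.ofReal_add hcp0 hcm0, show (1+t)/2 + (1-t)/2 = 1 by ring,
      ENNReal.ofReal_one]
  -- the random variables
  set X₁ : Om → ℝ := fun ω => sg ω.1.1 * |f₁ ω.2| with hX₁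
  set X₂ : Om → ℝ := fun ω => sg ω.1.2.1 * |f₂ ω.2| with hX₂
  set X₃ : Om → ℝ := fun ω => sg ω.1.2.2 * |f₃ ω.2| with hX₃
  have hX₁m : Measurable X₁ :=
    ((measurable_of_countable sg).comp measurable_fst.fst).mul (hf₁.abs.comp measurable_snd)
  have hX₂m : Measurable X₂ :=
    ((measurable_of_countable sg).comp measurable_fst.snd.fst).mul (hf₂.abs.comp measurable_snd)
  have hX₃m : Measurable X₃ :=
    ((measurable_of_countable sg).comp measurable_fst.snd.snd).mul (hf₃.abs.comp measurable_snd)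
  -- probability measure
  have hRuniv : ∀ b : Bool × Bool × Bool, R b Set.univ = 1 := fun b => by
    rw [hR]
    rw [Measure.map_apply measurable_prodMk_left MeasurableSet.univ]
    simp
  have hQpu : Qp Set.univ = 1 := by
    rw [hQp]
    simp only [Measure.smul_apply, Measure.coe_add, Pi.add_apply, hRuniv, smul_eq_mul]
    rw [show (1+1+1+1 : ℝ≥0∞) = 4 by norm_num,
      ENNReal.inv_mul_cancel (by norm_num) (by norm_num)]
  have hQmu : Qm Set.univ = 1 := by
    rw [hQm]
    simp only [Measure.smul_apply, Measure.coe_add, Pi.add_apply, hRuniv, smul_eq_mul]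
    rw [show (1+1+1+1 : ℝ≥0∞) = 4 by norm_num,
      ENNReal.inv_mul_cancel (by norm_num) (by norm_num)]
  have hPprob : IsProbabilityMeasure P := by
    constructor
    rw [hP]
    simp only [Measure.smul_apply, Measure.coe_add, Pi.add_apply, hQpu, hQmu, smul_eq_mul,
      mul_one]
    exact hcpcm
  -- marginals
  have hfold : ∀ (f : ℝ → ℝ), Measurable f → (∀ u ∈ Set.Ioo (0:ℝ) 1, f (1 - u) = - f u) →
      (4 : ℝ≥0∞)⁻¹ • (μ.map (fun u => |f u|) + μ.map (fun u => |f u|)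
        + μ.map (fun u => -|f u|) + μ.map (fun u => -|f u|)) = μ.map f := by
    intro f hf hsym
    exact quarter _ _ _ (law_abs f hf hsym)
  have hmar1 : P.map X₁ = μ.map f₁ := by
    have hr : ∀ b : Bool × Bool × Bool, (R b).map X₁ = μ.map (fun u => sg b.1 * |f₁ u|) :=
      fun b => mapR μ b hX₁m
    have hp : Qp.map X₁ = μ.map f₁ := by
      rw [hQp, Measure.map_smul, Measure.map_add _ _ hX₁m, Measure.map_add _ _ hX₁m,
        Measure.map_add _ _ hX₁m]
      simp only [hr, sg_true, sg_false, one_mul, neg_one_mul]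
      exact hfold f₁ hf₁ hf₁sym
    have hm : Qm.map X₁ = μ.map f₁ := by
      rw [hQm, Measure.map_smul, Measure.map_add _ _ hX₁m, Measure.map_add _ _ hX₁m,
        Measure.map_add _ _ hX₁m]
      simp only [hr, sg_true, sg_false, one_mul, neg_one_mul]
      exact hfold f₁ hf₁ hf₁sym
    rw [hP, Measure.map_add _ _ hX₁m, Measure.map_smul cp Qp X₁, Measure.map_smul cm Qm X₁,
      hp, hm, ← add_smul, hcpcm, one_smul]
  have hmar2 : P.map X₂ = μ.map f₂ := by
    have hr : ∀ b : Bool × Bool × Bool, (R b).map X₂ = μ.map (fun u => sg b.2.1 * |f₂ u|) :=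
      fun b => mapR μ b hX₂m
    have hp : Qp.map X₂ = μ.map f₂ := by
      rw [hQp, Measure.map_smul, Measure.map_add _ _ hX₂m, Measure.map_add _ _ hX₂m,
        Measure.map_add _ _ hX₂m]
      simp only [hr, sg_true, sg_false, one_mul, neg_one_mul]
      rw [reord1]
      exact hfold f₂ hf₂ hf₂sym
    have hm : Qm.map X₂ = μ.map f₂ := by
      rw [hQm, Measure.map_smul, Measure.map_add _ _ hX₂m, Measure.map_add _ _ hX₂m,
        Measure.map_add _ _ hX₂m]
      simp only [hr, sg_true, sg_false, one_mul, neg_one_mul]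
      rw [reord1]
      exact hfold f₂ hf₂ hf₂sym
    rw [hP, Measure.map_add _ _ hX₂m, Measure.map_smul cp Qp X₂, Measure.map_smul cm Qm X₂,
      hp, hm, ← add_smul, hcpcm, one_smul]
  have hmar3 : P.map X₃ = μ.map f₃ := by
    have hr : ∀ b : Bool × Bool × Bool, (R b).map X₃ = μ.map (fun u => sg b.2.2 * |f₃ u|) :=
      fun b => mapR μ b hX₃m
    have hp : Qp.map X₃ = μ.map f₃ := by
      rw [hQp, Measure.map_smul, Measure.map_add _ _ hX₃m, Measure.map_add _ _ hX₃m,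
        Measure.map_add _ _ hX₃m]
      simp only [hr, sg_true, sg_false, one_mul, neg_one_mul]
      rw [reord2]
      exact hfold f₃ hf₃ hf₃sym
    have hm : Qm.map X₃ = μ.map f₃ := by
      rw [hQm, Measure.map_smul, Measure.map_add _ _ hX₃m, Measure.map_add _ _ hX₃m,
        Measure.map_add _ _ hX₃m]
      simp only [hr, sg_true, sg_false, one_mul, neg_one_mul]
      rw [reord3]
      exact hfold f₃ hf₃ hf₃sym
    rw [hP, Measure.map_add _ _ hX₃m, Measure.map_smul cp Qp X₃, Measure.map_smul cm Qm X₃,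
      hp, hm, ← add_smul, hcpcm, one_smul]
  have hint12 : ∫ ω, X₁ ω * X₂ ω ∂P = 0 := by
    have hgm : Measurable (fun ω : Om => X₁ ω * X₂ ω) := hX₁m.mul hX₂m
    have hcompb : ∀ b : Bool × Bool × Bool,
        (fun u => X₁ ((b, u) : Om) * X₂ ((b, u) : Om))
          = fun u => (sg b.1 * sg b.2.1) * (|f₁ u| * |f₂ u|) := by
      intro b
      funext u
      simp only [hX₁, hX₂]
      ring
    have hib : ∀ b : Bool × Bool × Bool,
        Integrable (fun u => X₁ ((b, u) : Om) * X₂ ((b, u) : Om)) μ := by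
      intro b
      rw [hcompb b]
      exact h12.const_mul _
    have hiR : ∀ b : Bool × Bool × Bool, Integrable (fun ω : Om => X₁ ω * X₂ ω) (R b) :=
      fun b => intableR μ b hgm (hib b)
    have hvR : ∀ b : Bool × Bool × Bool, ∫ ω, X₁ ω * X₂ ω ∂(R b)
        = (sg b.1 * sg b.2.1) * ∫ u, |f₁ u| * |f₂ u| ∂μ := by
      intro b
      simp only [hR]
      rw [intR μ b hgm, hcompb b, integral_const_mul]
    have hiQp : Integrable (fun ω : Om => X₁ ω * X₂ ω) Qp := by
      rw [hQp]
      exact ((((hiR _).add_measure (hiR _)).add_measure (hiR _)).add_measure (hiR _)).smul_measure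
        (ENNReal.inv_ne_top.mpr (by norm_num))
    have hiQm : Integrable (fun ω : Om => X₁ ω * X₂ ω) Qm := by
      rw [hQm]
      exact ((((hiR _).add_measure (hiR _)).add_measure (hiR _)).add_measure (hiR _)).smul_measure
        (ENNReal.inv_ne_top.mpr (by norm_num))
    have hQpv : ∫ ω, X₁ ω * X₂ ω ∂Qp = 0 := by
      rw [hQp, int_quarter _ _ _ _ (hiR _) (hiR _) (hiR _) (hiR _), hvR, hvR, hvR, hvR]
      simp only [sg_true, sg_false]
      ring
    have hQmv : ∫ ω, X₁ ω * X₂ ω ∂Qm = 0 := by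
      rw [hQm, int_quarter _ _ _ _ (hiR _) (hiR _) (hiR _) (hiR _), hvR, hvR, hvR, hvR]
      simp only [sg_true, sg_false]
      ring
    rw [hP, int_P cp cm hcpT hcmT Qp Qm hiQp hiQm, hQpv, hQmv]
    ring
  have hint13 : ∫ ω, X₁ ω * X₃ ω ∂P = 0 := by
    have hgm : Measurable (fun ω : Om => X₁ ω * X₃ ω) := hX₁m.mul hX₃m
    have hcompb : ∀ b : Bool × Bool × Bool,
        (fun u => X₁ ((b, u) : Om) * X₃ ((b, u) : Om))
          = fun u => (sg b.1 * sg b.2.2) * (|f₁ u| * |f₃ u|) := by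
      intro b
      funext u
      simp only [hX₁, hX₃]
      ring
    have hib : ∀ b : Bool × Bool × Bool,
        Integrable (fun u => X₁ ((b, u) : Om) * X₃ ((b, u) : Om)) μ := by
      intro b
      rw [hcompb b]
      exact h13.const_mul _
    have hiR : ∀ b : Bool × Bool × Bool, Integrable (fun ω : Om => X₁ ω * X₃ ω) (R b) :=
      fun b => intableR μ b hgm (hib b)
    have hvR : ∀ b : Bool × Bool × Bool, ∫ ω, X₁ ω * X₃ ω ∂(R b)
        = (sg b.1 * sg b.2.2) * ∫ u, |f₁ u| * |f₃ u| ∂μ := by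
      intro b
      simp only [hR]
      rw [intR μ b hgm, hcompb b, integral_const_mul]
    have hiQp : Integrable (fun ω : Om => X₁ ω * X₃ ω) Qp := by
      rw [hQp]
      exact ((((hiR _).add_measure (hiR _)).add_measure (hiR _)).add_measure (hiR _)).smul_measure
        (ENNReal.inv_ne_top.mpr (by norm_num))
    have hiQm : Integrable (fun ω : Om => X₁ ω * X₃ ω) Qm := by
      rw [hQm]
      exact ((((hiR _).add_measure (hiR _)).add_measure (hiR _)).add_measure (hiR _)).smul_measure
        (ENNReal.inv_ne_top.mpr (by norm_num))
    have hQpv : ∫ ω, X₁ ω * X₃ ω ∂Qp = 0 := by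
      rw [hQp, int_quarter _ _ _ _ (hiR _) (hiR _) (hiR _) (hiR _), hvR, hvR, hvR, hvR]
      simp only [sg_true, sg_false]
      ring
    have hQmv : ∫ ω, X₁ ω * X₃ ω ∂Qm = 0 := by
      rw [hQm, int_quarter _ _ _ _ (hiR _) (hiR _) (hiR _) (hiR _), hvR, hvR, hvR, hvR]
      simp only [sg_true, sg_false]
      ring
    rw [hP, int_P cp cm hcpT hcmT Qp Qm hiQp hiQm, hQpv, hQmv]
    ring
  have hint23 : ∫ ω, X₂ ω * X₃ ω ∂P = 0 := by
    have hgm : Measurable (fun ω : Om => X₂ ω * X₃ ω) := hX₂m.mul hX₃m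
    have hcompb : ∀ b : Bool × Bool × Bool,
        (fun u => X₂ ((b, u) : Om) * X₃ ((b, u) : Om))
          = fun u => (sg b.2.1 * sg b.2.2) * (|f₂ u| * |f₃ u|) := by
      intro b
      funext u
      simp only [hX₂, hX₃]
      ring
    have hib : ∀ b : Bool × Bool × Bool,
        Integrable (fun u => X₂ ((b, u) : Om) * X₃ ((b, u) : Om)) μ := by
      intro b
      rw [hcompb b]
      exact h23.const_mul _
    have hiR : ∀ b : Bool × Bool × Bool, Integrable (fun ω : Om => X₂ ω * X₃ ω) (R b) :=
      fun b => intableR μ b hgm (hib b)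
    have hvR : ∀ b : Bool × Bool × Bool, ∫ ω, X₂ ω * X₃ ω ∂(R b)
        = (sg b.2.1 * sg b.2.2) * ∫ u, |f₂ u| * |f₃ u| ∂μ := by
      intro b
      simp only [hR]
      rw [intR μ b hgm, hcompb b, integral_const_mul]
    have hiQp : Integrable (fun ω : Om => X₂ ω * X₃ ω) Qp := by
      rw [hQp]
      exact ((((hiR _).add_measure (hiR _)).add_measure (hiR _)).add_measure (hiR _)).smul_measure
        (ENNReal.inv_ne_top.mpr (by norm_num))
    have hiQm : Integrable (fun ω : Om => X₂ ω * X₃ ω) Qm := by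
      rw [hQm]
      exact ((((hiR _).add_measure (hiR _)).add_measure (hiR _)).add_measure (hiR _)).smul_measure
        (ENNReal.inv_ne_top.mpr (by norm_num))
    have hQpv : ∫ ω, X₂ ω * X₃ ω ∂Qp = 0 := by
      rw [hQp, int_quarter _ _ _ _ (hiR _) (hiR _) (hiR _) (hiR _), hvR, hvR, hvR, hvR]
      simp only [sg_true, sg_false]
      ring
    have hQmv : ∫ ω, X₂ ω * X₃ ω ∂Qm = 0 := by
      rw [hQm, int_quarter _ _ _ _ (hiR _) (hiR _) (hiR _) (hiR _), hvR, hvR, hvR, hvR]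
      simp only [sg_true, sg_false]
      ring
    rw [hP, int_P cp cm hcpT hcmT Qp Qm hiQp hiQm, hQpv, hQmv]
    ring
  have hint123 : ∫ ω, X₁ ω * X₂ ω * X₃ ω ∂P = s := by
    have hgm : Measurable (fun ω : Om => X₁ ω * X₂ ω * X₃ ω) := (hX₁m.mul hX₂m).mul hX₃m
    have hcompb : ∀ b : Bool × Bool × Bool,
        (fun u => X₁ ((b, u) : Om) * X₂ ((b, u) : Om) * X₃ ((b, u) : Om))
          = fun u => (sg b.1 * sg b.2.1 * sg b.2.2) * (|f₁ u| * |f₂ u| * |f₃ u|) := by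
      intro b
      funext u
      simp only [hX₁, hX₂, hX₃]
      ring
    have hib : ∀ b : Bool × Bool × Bool,
        Integrable (fun u => X₁ ((b, u) : Om) * X₂ ((b, u) : Om) * X₃ ((b, u) : Om)) μ := by
      intro b
      rw [hcompb b]
      exact h123.const_mul _
    have hiR : ∀ b : Bool × Bool × Bool,
        Integrable (fun ω : Om => X₁ ω * X₂ ω * X₃ ω) (R b) :=
      fun b => intableR μ b hgm (hib b)
    have hvR : ∀ b : Bool × Bool × Bool, ∫ ω, X₁ ω * X₂ ω * X₃ ω ∂(R b)
        = (sg b.1 * sg b.2.1 * sg b.2.2) * ∫ u, |f₁ u| * |f₂ u| * |f₃ u| ∂μ := by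
      intro b
      simp only [hR]
      rw [intR μ b hgm, hcompb b, integral_const_mul]
    have hiQp : Integrable (fun ω : Om => X₁ ω * X₂ ω * X₃ ω) Qp := by
      rw [hQp]
      exact ((((hiR _).add_measure (hiR _)).add_measure (hiR _)).add_measure (hiR _)).smul_measure
        (ENNReal.inv_ne_top.mpr (by norm_num))
    have hiQm : Integrable (fun ω : Om => X₁ ω * X₂ ω * X₃ ω) Qm := by
      rw [hQm]
      exact ((((hiR _).add_measure (hiR _)).add_measure (hiR _)).add_measure (hiR _)).smul_measure
        (ENNReal.inv_ne_top.mpr (by norm_num))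
    have hQpv : ∫ ω, X₁ ω * X₂ ω * X₃ ω ∂Qp = I := by
      rw [hQp, int_quarter _ _ _ _ (hiR _) (hiR _) (hiR _) (hiR _), hvR, hvR, hvR, hvR, hKI]
      simp only [sg_true, sg_false]
      ring
    have hQmv : ∫ ω, X₁ ω * X₂ ω * X₃ ω ∂Qm = -I := by
      rw [hQm, int_quarter _ _ _ _ (hiR _) (hiR _) (hiR _) (hiR _), hvR, hvR, hvR, hvR, hKI]
      simp only [sg_true, sg_false]
      ring
    rw [hP, int_P cp cm hcpT hcmT Qp Qm hiQp hiQm, hQpv, hQmv, hcpR, hcmR]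
    linear_combination hts
  exact ⟨Om, inferInstance, P, hPprob, X₁, X₂, X₃, hX₁m, hX₂m, hX₃m, hmar1, hmar2, hmar3,
    hint12, hint13, hint23, hint123⟩
end

section
/- Under the mixture copula C^λ, the pairwise Spearman rank correlations vanish while the standardized rank coskewness spans [−1,1]: E[(U−1/2)(U₂−1/2)] = 0, E[(U−1/2)(U₃^λ−1/2)] = 0, E[(U₂−1/2)(U₃^λ−1/2)] = 0, and 32·E[(U−1/2)(U₂−1/2)(U₃^λ−1/2)] = 2λ−1 for every λ ∈ [0,1]. -/
open MeasureTheory ProbabilityTheory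

/-- Indicator of the event `x > 1/2`. -/
noncomputable def ind (x : ℝ) : ℝ := if x > 1/2 then 1 else 0

/-- `U₂ = IJU + I(1−J)(1−U) + (1−I)JU + (1−I)(1−J)(1−U)`. -/
noncomputable def u2 (u v : ℝ) : ℝ :=
  ind u * ind v * u + ind u * (1 - ind v) * (1 - u)
    + (1 - ind u) * ind v * u + (1 - ind u) * (1 - ind v) * (1 - u)

/-- `U₃ᴹ = IJU + I(1−J)(1−U) + (1−I)J(1−U) + (1−I)(1−J)U`. -/
noncomputable def u3M (u v : ℝ) : ℝ :=
  ind u * ind v * u + ind u * (1 - ind v) * (1 - u)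
    + (1 - ind u) * ind v * (1 - u) + (1 - ind u) * (1 - ind v) * u

/-- `U₃ᵐ = IJ(1−U) + I(1−J)U + (1−I)JU + (1−I)(1−J)(1−U)`. -/
noncomputable def u3m (u v : ℝ) : ℝ :=
  ind u * ind v * (1 - u) + ind u * (1 - ind v) * u
    + (1 - ind u) * ind v * u + (1 - ind u) * (1 - ind v) * (1 - u)

lemma measurable_ind : Measurable ind :=
  Measurable.ite (measurableSet_lt measurable_const measurable_id) measurable_const
    measurable_const

lemma abs_g (x : ℝ) : |2 * ind x - 1| = 1 := by unfold ind; split_ifs <;> norm_num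

lemma sq_g (x : ℝ) : (2 * ind x - 1) ^ 2 = 1 := by unfold ind; split_ifs <;> norm_num

lemma u2_eq (u v : ℝ) : u2 u v - 1/2 = (2 * ind v - 1) * (u - 1/2) := by
  unfold u2 ind; split_ifs <;> ring

lemma u3_eq (u v b : ℝ) (hb : b = 0 ∨ b = 1) :
    b * u3M u v + (1 - b) * u3m u v - 1/2
      = (2 * b - 1) * ((2 * ind u - 1) * ((2 * ind v - 1) * (u - 1/2))) := by
  unfold u3M u3m ind; rcases hb with h | h <;> subst h <;> split_ifs <;> ring

lemma split_int (f : ℝ → ℝ) (hf : Continuous f) :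
    ∫ x in Set.Icc (0:ℝ) 1, f x * (2 * ind x - 1)
      = (∫ x in (1/2:ℝ)..1, f x) - ∫ x in (0:ℝ)..(1/2:ℝ), f x := by
  have hmeas : Measurable fun x : ℝ => f x * (2 * ind x - 1) :=
    hf.measurable.mul ((measurable_const.mul measurable_ind).sub measurable_const)
  have hint : ∀ a b : ℝ, IntegrableOn (fun x => f x * (2 * ind x - 1)) (Set.Ioc a b) volume := by
    intro a b
    refine Integrable.bdd_mul (c := 1) (hf.integrableOn_Ioc)
      (((measurable_const.mul measurable_ind).sub measurable_const).aestronglyMeasurable)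
      (ae_of_all _ fun x => ?_) |>.congr (ae_of_all _ fun x => mul_comm _ _)
    simp [abs_g x]
  rw [MeasureTheory.integral_Icc_eq_integral_Ioc,
    ← Set.Ioc_union_Ioc_eq_Ioc (by norm_num : (0:ℝ) ≤ 1/2) (by norm_num : (1:ℝ)/2 ≤ 1),
    MeasureTheory.setIntegral_union (Set.Ioc_disjoint_Ioc_of_le le_rfl) measurableSet_Ioc
      (hint 0 (1/2)) (hint (1/2) 1)]
  have h1 : ∫ x in Set.Ioc (0:ℝ) (1/2), f x * (2 * ind x - 1)
      = ∫ x in Set.Ioc (0:ℝ) (1/2), (- f x) := by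
    refine MeasureTheory.setIntegral_congr_fun measurableSet_Ioc fun x hx => ?_
    have : ¬ (x > 1/2) := not_lt.2 hx.2
    simp only [ind, if_neg this]; ring
  have h2 : ∫ x in Set.Ioc (1/2:ℝ) 1, f x * (2 * ind x - 1)
      = ∫ x in Set.Ioc (1/2:ℝ) 1, f x := by
    refine MeasureTheory.setIntegral_congr_fun measurableSet_Ioc fun x hx => ?_
    simp only [ind, if_pos hx.1]; ring
  rw [h1, h2, MeasureTheory.integral_neg,
    ← intervalIntegral.integral_of_le (by norm_num : (0:ℝ) ≤ 1/2),
    ← intervalIntegral.integral_of_le (by norm_num : (1:ℝ)/2 ≤ 1)]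
  ring

lemma intA : ∫ x in Set.Icc (0:ℝ) 1, (2 * ind x - 1) = 0 := by
  have := split_int (fun _ => (1:ℝ)) continuous_const
  simp only [one_mul] at this
  rw [this]; simp; norm_num

lemma intB1 : ∫ x in Set.Icc (0:ℝ) 1, (x - 1/2) ^ 2 * (2 * ind x - 1) = 0 := by
  rw [split_int _ (by continuity)]
  have h : ∀ a b : ℝ, ∫ x in a..b, (x - 1/2) ^ 2 = ∫ x in (a - 1/2)..(b - 1/2), x ^ 2 :=
    fun a b => intervalIntegral.integral_comp_sub_right (fun x => x ^ 2) (1/2)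
  rw [h, h, integral_pow, integral_pow]; norm_num

lemma intC : ∫ x in Set.Icc (0:ℝ) 1, (x - 1/2) ^ 3 * (2 * ind x - 1) = 1/32 := by
  rw [split_int _ (by continuity)]
  have h : ∀ a b : ℝ, ∫ x in a..b, (x - 1/2) ^ 3 = ∫ x in (a - 1/2)..(b - 1/2), x ^ 3 :=
    fun a b => intervalIntegral.integral_comp_sub_right (fun x => x ^ 3) (1/2)
  rw [h, h, integral_pow, integral_pow]; norm_num

/-- under the mixture copula `C^λ`, the pairwise Spearman rank correlations
vanish while the standardized rank coskewness equals `2λ−1`. -/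
theorem stmt9 {Ω : Type} [MeasurableSpace Ω] (P : Measure Ω) [IsProbabilityMeasure P]
    (U V B : Ω → ℝ) (lam : ℝ) (hlam : lam ∈ Set.Icc (0:ℝ) 1)
    (hU : Measurable U) (hV : Measurable V) (hB : Measurable B)
    (hUunif : P.map U = volume.restrict (Set.Icc (0:ℝ) 1))
    (hVunif : P.map V = volume.restrict (Set.Icc (0:ℝ) 1))
    (hUV : IndepFun U V P)
    (hB01 : ∀ ω, B ω = 0 ∨ B ω = 1)
    (hBlam : P {ω | B ω = 1} = ENNReal.ofReal lam)
    (hBind : IndepFun (fun ω => (U ω, V ω)) B P) :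
    (∫ ω, (U ω - 1/2) * (u2 (U ω) (V ω) - 1/2) ∂P = 0) ∧
    (∫ ω, (U ω - 1/2)
        * ((B ω * u3M (U ω) (V ω) + (1 - B ω) * u3m (U ω) (V ω)) - 1/2) ∂P = 0) ∧
    (∫ ω, (u2 (U ω) (V ω) - 1/2)
        * ((B ω * u3M (U ω) (V ω) + (1 - B ω) * u3m (U ω) (V ω)) - 1/2) ∂P = 0) ∧
    32 * ∫ ω, (U ω - 1/2) * (u2 (U ω) (V ω) - 1/2)
        * ((B ω * u3M (U ω) (V ω) + (1 - B ω) * u3m (U ω) (V ω)) - 1/2) ∂P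
      = 2 * lam - 1 := by
  -- measurable auxiliary functions
  have hgm : Measurable fun x : ℝ => 2 * ind x - 1 :=
    (measurable_const.mul measurable_ind).sub measurable_const
  have hh2 : Measurable fun u : ℝ => (u - 1/2) ^ 2 * (2 * ind u - 1) :=
    (((measurable_id.sub measurable_const).pow measurable_const)).mul hgm
  have hh3 : Measurable fun u : ℝ => (u - 1/2) ^ 3 * (2 * ind u - 1) :=
    (((measurable_id.sub measurable_const).pow measurable_const)).mul hgm
  have hf2 : Measurable fun u : ℝ => (u - 1/2) ^ 2 :=
    (measurable_id.sub measurable_const).pow measurable_const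
  have hk : Measurable fun b : ℝ => 2 * b - 1 :=
    (measurable_const.mul measurable_id).sub measurable_const
  -- a.e. membership in [0,1]
  have hae : ∀ (X : Ω → ℝ), Measurable X → P.map X = volume.restrict (Set.Icc (0:ℝ) 1) →
      ∀ᵐ ω ∂P, X ω ∈ Set.Icc (0:ℝ) 1 := by
    intro X hX hXu
    have h0 : P.map X (Set.Icc (0:ℝ) 1)ᶜ = 0 := by
      rw [hXu, Measure.restrict_apply measurableSet_Icc.compl]
      simp
    rw [Measure.map_apply hX measurableSet_Icc.compl] at h0
    rw [ae_iff]
    simpa [Set.preimage, Set.compl_def] using h0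
  have haeU := hae U hU hUunif
  have haeV := hae V hV hVunif
  -- bounds
  have habsg : ∀ x : ℝ, |2 * ind x - 1| = 1 := abs_g
  have habsk : ∀ ω, |2 * B ω - 1| ≤ 1 := by
    intro ω; rcases hB01 ω with h | h <;> rw [h] <;> norm_num
  have hboundU : ∀ (n : ℕ) (x : ℝ), x ∈ Set.Icc (0:ℝ) 1 →
      |(x - 1/2) ^ n * (2 * ind x - 1)| ≤ 1 := by
    intro n x hx
    rw [abs_mul, habsg, mul_one, abs_pow]
    refine pow_le_one₀ (abs_nonneg _) ?_
    rw [abs_le]; constructor <;> [linarith [hx.1]; linarith [hx.2]]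
  -- integrability helper
  have hIbdd : ∀ (f : Ω → ℝ), Measurable f → (∀ᵐ ω ∂P, |f ω| ≤ 1) → Integrable f P := by
    intro f hf hb
    exact Integrable.mono' (integrable_const 1) hf.aestronglyMeasurable hb
  -- key integrable functions
  have hIh2U : Integrable (fun ω => (U ω - 1/2) ^ 2 * (2 * ind (U ω) - 1)) P :=
    hIbdd _ (hh2.comp hU) (haeU.mono fun ω hω => hboundU 2 _ hω)
  have hIh3U : Integrable (fun ω => (U ω - 1/2) ^ 3 * (2 * ind (U ω) - 1)) P :=
    hIbdd _ (hh3.comp hU) (haeU.mono fun ω hω => hboundU 3 _ hω)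
  have hIf2U : Integrable (fun ω => (U ω - 1/2) ^ 2) P := by
    refine hIbdd _ (hf2.comp hU) (haeU.mono fun ω hω => ?_)
    rw [abs_pow]
    refine pow_le_one₀ (abs_nonneg _) ?_
    rw [abs_le]; constructor <;> [linarith [hω.1]; linarith [hω.2]]
  have hIgV : Integrable (fun ω => 2 * ind (V ω) - 1) P :=
    hIbdd _ (hgm.comp hV) (ae_of_all _ fun ω => (habsg (V ω)).le)
  have hIkB : Integrable (fun ω => 2 * B ω - 1) P :=
    hIbdd _ (hk.comp hB) (ae_of_all _ habsk)
  have hIh2gUV : Integrable (fun ω => (U ω - 1/2) ^ 2 * (2 * ind (U ω) - 1)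
      * (2 * ind (V ω) - 1)) P := by
    refine hIbdd _ (((hh2.comp hU)).mul (hgm.comp hV)) (haeU.mono fun ω hω => ?_)
    rw [abs_mul, habsg, mul_one]
    exact hboundU 2 _ hω
  -- expectation computations
  have EgV : ∫ ω, (2 * ind (V ω) - 1) ∂P = 0 := by
    rw [← MeasureTheory.integral_map hV.aemeasurable hgm.aestronglyMeasurable, hVunif]
    exact intA
  have Eh2U : ∫ ω, (U ω - 1/2) ^ 2 * (2 * ind (U ω) - 1) ∂P = 0 := by
    rw [← MeasureTheory.integral_map hU.aemeasurable hh2.aestronglyMeasurable, hUunif]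
    exact intB1
  have Eh3U : ∫ ω, (U ω - 1/2) ^ 3 * (2 * ind (U ω) - 1) ∂P = 1/32 := by
    rw [← MeasureTheory.integral_map hU.aemeasurable hh3.aestronglyMeasurable, hUunif]
    exact intC
  have EB : ∫ ω, B ω ∂P = lam := by
    have heq : B = Set.indicator {ω | B ω = 1} fun _ => (1:ℝ) := by
      funext ω
      rcases hB01 ω with h | h <;> simp [Set.indicator, h]
    rw [heq, MeasureTheory.integral_indicator_const (1:ℝ)
      (show MeasurableSet {ω | B ω = 1} from hB (measurableSet_singleton 1))]
    rw [measureReal_def, hBlam, smul_eq_mul, mul_one, ENNReal.toReal_ofReal hlam.1]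
  have hIB : Integrable B P := by
    refine hIbdd _ hB (ae_of_all _ fun ω => ?_)
    rcases hB01 ω with h | h <;> rw [h] <;> norm_num
  have EkB : ∫ ω, (2 * B ω - 1) ∂P = 2 * lam - 1 := by
    rw [MeasureTheory.integral_sub (hIB.const_mul 2) (integrable_const 1),
      MeasureTheory.integral_const_mul, EB, MeasureTheory.integral_const]
    simp
  -- independence splits
  have split2 : ∫ ω, (U ω - 1/2) ^ 2 * (2 * ind (U ω) - 1) * (2 * ind (V ω) - 1) ∂P
      = (∫ ω, (U ω - 1/2) ^ 2 * (2 * ind (U ω) - 1) ∂P) * ∫ ω, (2 * ind (V ω) - 1) ∂P :=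
    (hUV.comp hh2 hgm).integral_fun_mul_eq_mul_integral hIh2U.aestronglyMeasurable hIgV.aestronglyMeasurable
  have split1 : ∫ ω, (U ω - 1/2) ^ 2 * (2 * ind (V ω) - 1) ∂P
      = (∫ ω, (U ω - 1/2) ^ 2 ∂P) * ∫ ω, (2 * ind (V ω) - 1) ∂P :=
    (hUV.comp hf2 hgm).integral_fun_mul_eq_mul_integral hIf2U.aestronglyMeasurable hIgV.aestronglyMeasurable
  have splitB2 : ∫ ω, ((U ω - 1/2) ^ 2 * (2 * ind (U ω) - 1) * (2 * ind (V ω) - 1))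
        * (2 * B ω - 1) ∂P
      = (∫ ω, (U ω - 1/2) ^ 2 * (2 * ind (U ω) - 1) * (2 * ind (V ω) - 1) ∂P)
        * ∫ ω, (2 * B ω - 1) ∂P :=
    (hBind.comp ((hh2.comp measurable_fst).mul (hgm.comp measurable_snd)) hk)
      |>.integral_fun_mul_eq_mul_integral hIh2gUV.aestronglyMeasurable hIkB.aestronglyMeasurable
  have splitB3 : ∫ ω, ((U ω - 1/2) ^ 2 * (2 * ind (U ω) - 1)) * (2 * B ω - 1) ∂P
      = (∫ ω, (U ω - 1/2) ^ 2 * (2 * ind (U ω) - 1) ∂P) * ∫ ω, (2 * B ω - 1) ∂P :=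
    (hBind.comp (hh2.comp measurable_fst) hk).integral_fun_mul_eq_mul_integral hIh2U.aestronglyMeasurable hIkB.aestronglyMeasurable
  have splitB4 : ∫ ω, ((U ω - 1/2) ^ 3 * (2 * ind (U ω) - 1)) * (2 * B ω - 1) ∂P
      = (∫ ω, (U ω - 1/2) ^ 3 * (2 * ind (U ω) - 1) ∂P) * ∫ ω, (2 * B ω - 1) ∂P :=
    (hBind.comp (hh3.comp measurable_fst) hk).integral_fun_mul_eq_mul_integral hIh3U.aestronglyMeasurable hIkB.aestronglyMeasurable
  refine ⟨?_, ?_, ?_, ?_⟩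
  · -- goal 1
    have e : ∀ ω, (U ω - 1/2) * (u2 (U ω) (V ω) - 1/2)
        = (U ω - 1/2) ^ 2 * (2 * ind (V ω) - 1) := by
      intro ω; rw [u2_eq]; ring
    rw [integral_congr_ae (ae_of_all _ e), split1, EgV, mul_zero]
  · -- goal 2
    have e : ∀ ω, (U ω - 1/2)
          * ((B ω * u3M (U ω) (V ω) + (1 - B ω) * u3m (U ω) (V ω)) - 1/2)
        = ((U ω - 1/2) ^ 2 * (2 * ind (U ω) - 1) * (2 * ind (V ω) - 1))
          * (2 * B ω - 1) := by
      intro ω; rw [u3_eq _ _ _ (hB01 ω)]; ring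
    rw [integral_congr_ae (ae_of_all _ e), splitB2, split2, EgV, mul_zero, zero_mul]
  · -- goal 3
    have e : ∀ ω, (u2 (U ω) (V ω) - 1/2)
          * ((B ω * u3M (U ω) (V ω) + (1 - B ω) * u3m (U ω) (V ω)) - 1/2)
        = ((U ω - 1/2) ^ 2 * (2 * ind (U ω) - 1)) * (2 * B ω - 1) := by
      intro ω
      rw [u2_eq, u3_eq _ _ _ (hB01 ω)]
      linear_combination ((U ω - 1/2) ^ 2 * (2 * ind (U ω) - 1) * (2 * B ω - 1)) * sq_g (V ω)
    rw [integral_congr_ae (ae_of_all _ e), splitB3, Eh2U, zero_mul]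
  · -- goal 4
    have e : ∀ ω, (U ω - 1/2) * (u2 (U ω) (V ω) - 1/2)
          * ((B ω * u3M (U ω) (V ω) + (1 - B ω) * u3m (U ω) (V ω)) - 1/2)
        = ((U ω - 1/2) ^ 3 * (2 * ind (U ω) - 1)) * (2 * B ω - 1) := by
      intro ω
      rw [u2_eq, u3_eq _ _ _ (hB01 ω)]
      linear_combination ((U ω - 1/2) ^ 3 * (2 * ind (U ω) - 1) * (2 * B ω - 1)) * sq_g (V ω)
    rw [integral_congr_ae (ae_of_all _ e), splitB4, Eh3U, EkB]
    ring
end
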